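/- arXiv:2002.07258 — 2 statements merged into one kernel-verified Lean document; each statement's English description precedes it below -/
import Mathlib

section
/- Let θ, θ̂ ∈ ℝ^d, σ² ∈ (ℝ≥0 ∪ {∞})^d, X ⊆ {0,1}^d finite nonempty, x* ∈ argmax_{x∈X} θᵀx, and x ∈ X with gap Δ_x = θᵀx* − θᵀx > 0. Suppose: (i) θᵀx* ≤ θ̂ᵀx* + √(σ²ᵀx*); (ii) for constants ε ∈ (0,1], δ ≥ 0: max_{y∈X}{θ̂ᵀy + √(σ²ᵀy)} ≤ δ + θ̂ᵀx + (1/ε)√(σ²ᵀx); (iii) θ̂ᵀx ≤ θᵀx + Δ_x/2; (iv) δ ≤ Δ_x/4. Then Δ_x ≤ (4/ε)√(σ²ᵀx). -/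
open Finset

/-- Key event implication in the regret analysis of AESCB. -/
theorem aescb_gap_bound (d : ℕ) (θ θhat σsq : Fin d → ℝ)
    (hσ : ∀ i, 0 ≤ σsq i)
    (X : Finset (Fin d → ℝ)) (hXne : X.Nonempty)
    (hXbin : ∀ x ∈ X, ∀ i, x i = 0 ∨ x i = 1)
    (xstar : Fin d → ℝ) (hxstar : xstar ∈ X)
    (hopt : ∀ y ∈ X, ∑ i, θ i * y i ≤ ∑ i, θ i * xstar i)
    (x : Fin d → ℝ) (hx : x ∈ X)
    (Δ : ℝ) (hΔ : Δ = ∑ i, θ i * xstar i - ∑ i, θ i * x i) (hΔpos : 0 < Δ)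
    (ε δ : ℝ) (hε0 : 0 < ε) (hε1 : ε ≤ 1) (hδ : 0 ≤ δ)
    (h1 : ∑ i, θ i * xstar i ≤ ∑ i, θhat i * xstar i + Real.sqrt (∑ i, σsq i * xstar i))
    (h2 : ∀ y ∈ X, ∑ i, θhat i * y i + Real.sqrt (∑ i, σsq i * y i)
            ≤ δ + ∑ i, θhat i * x i + (1 / ε) * Real.sqrt (∑ i, σsq i * x i))
    (h3 : ∑ i, θhat i * x i ≤ ∑ i, θ i * x i + Δ / 2)
    (h4 : δ ≤ Δ / 4) :
    Δ ≤ (4 / ε) * Real.sqrt (∑ i, σsq i * x i) := by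
  have h2' := h2 xstar hxstar
  have key : Δ / 4 ≤ (1 / ε) * Real.sqrt (∑ i, σsq i * x i) := by linarith
  have : (4 / ε) * Real.sqrt (∑ i, σsq i * x i)
      = 4 * ((1 / ε) * Real.sqrt (∑ i, σsq i * x i)) := by ring
  linarith
end

section
/- Let X ⊆ {0,1}^d be finite nonempty, a ∈ ℕ^d, b ∈ ℝ_{≥0}^d, S = {0,...,N} with aᵀx ∈ S for all x ∈ X, and ε ∈ (0,1]. Suppose for each s ∈ S there exists x̄^s ∈ X with aᵀx̄^s ≥ s and bᵀx̄^s ≥ ε · max{bᵀx : x ∈ X, aᵀx ≥ s}. Let s* ∈ argmax_{s∈S} { s + (1/ε)√(bᵀx̄^s) }. Then max_{x∈X} { aᵀx + √(bᵀx) } ≤ aᵀx̄^{s*} + (1/ε)√(bᵀx̄^{s*}). -/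
open Finset

/-- Maximizing over budgets the value `s + (1/ε)√(bᵀx̄^s)`, where `x̄^s` is an
`ε`-approximate solution of the budgeted linear maximization, yields an
approximate maximizer of the index `aᵀx + √(bᵀx)` over `X`. -/
theorem budget_maximization (d N : ℕ) (X : Finset (Fin d → ℝ)) (hXne : X.Nonempty)
    (hXbin : ∀ x ∈ X, ∀ i, x i = 0 ∨ x i = 1)
    (a : Fin d → ℕ) (b : Fin d → ℝ) (hb : ∀ i, 0 ≤ b i)
    (hrange : ∀ x ∈ X, ∃ s : ℕ, s ≤ N ∧ ∑ i, (a i : ℝ) * x i = (s : ℝ))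
    (ε : ℝ) (hε0 : 0 < ε) (hε1 : ε ≤ 1)
    (xbar : ℕ → (Fin d → ℝ))
    (hxbar : ∀ s ≤ N, xbar s ∈ X ∧ (s : ℝ) ≤ ∑ i, (a i : ℝ) * xbar s i ∧
      ∀ x ∈ X, (s : ℝ) ≤ ∑ i, (a i : ℝ) * x i →
        ε * ∑ i, b i * x i ≤ ∑ i, b i * xbar s i)
    (sstar : ℕ) (hsstar : sstar ≤ N)
    (hopt : ∀ s ≤ N, (s : ℝ) + (1 / ε) * Real.sqrt (∑ i, b i * xbar s i)
      ≤ (sstar : ℝ) + (1 / ε) * Real.sqrt (∑ i, b i * xbar sstar i)) :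
    ∀ x ∈ X, ∑ i, (a i : ℝ) * x i + Real.sqrt (∑ i, b i * x i)
      ≤ ∑ i, (a i : ℝ) * xbar sstar i + (1 / ε) * Real.sqrt (∑ i, b i * xbar sstar i) := by
  intro x hx
  obtain ⟨s, hsN, hs⟩ := hrange x hx
  obtain ⟨hmem, hge, happrox⟩ := hxbar s hsN
  have hbx : (0:ℝ) ≤ ∑ i, b i * x i := by
    apply Finset.sum_nonneg
    intro i _
    rcases hXbin x hx i with h | h <;> simp [h, hb i]
  have key : Real.sqrt (∑ i, b i * x i) ≤ (1/ε) * Real.sqrt (∑ i, b i * xbar s i) := by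
    have h1 : ε * ∑ i, b i * x i ≤ ∑ i, b i * xbar s i := happrox x hx (le_of_eq hs.symm)
    have h2 : ∑ i, b i * x i ≤ (∑ i, b i * xbar s i) / ε := (le_div_iff₀' hε0).mpr h1
    have hbxs : (0:ℝ) ≤ ∑ i, b i * xbar s i := by
      apply Finset.sum_nonneg
      intro i _
      rcases hXbin _ hmem i with h | h <;> simp [h, hb i]
    have hsqrt : Real.sqrt ε ≤ 1 := Real.sqrt_le_one.mpr hε1
    have hsε : 0 < Real.sqrt ε := Real.sqrt_pos.mpr hε0
    have hεle : ε ≤ Real.sqrt ε := by nlinarith [Real.sq_sqrt hε0.le]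
    calc Real.sqrt (∑ i, b i * x i) ≤ Real.sqrt ((∑ i, b i * xbar s i) / ε) :=
          Real.sqrt_le_sqrt h2
      _ = Real.sqrt (∑ i, b i * xbar s i) / Real.sqrt ε := Real.sqrt_div hbxs ε
      _ ≤ Real.sqrt (∑ i, b i * xbar s i) / ε := by
          gcongr
      _ = (1/ε) * Real.sqrt (∑ i, b i * xbar s i) := by
          ring
  calc ∑ i, (a i : ℝ) * x i + Real.sqrt (∑ i, b i * x i)
      ≤ (s:ℝ) + (1/ε) * Real.sqrt (∑ i, b i * xbar s i) := by rw [hs]; exact add_le_add le_rfl key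
    _ ≤ (sstar:ℝ) + (1/ε) * Real.sqrt (∑ i, b i * xbar sstar i) := hopt s hsN
    _ ≤ ∑ i, (a i : ℝ) * xbar sstar i + (1/ε) * Real.sqrt (∑ i, b i * xbar sstar i) := by
        gcongr
        exact (hxbar sstar hsstar).2.1
end
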